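/- Let H be a separable Hilbert space and (X, μ) a σ-finite positive measure space such that η = inf{μ(E) : E measurable, 0 < μ(E) < ∞} > 0. Then every Bessel mapping F : X → H with Bessel bound B is norm bounded: for μ-almost every x ∈ X one has ‖F(x)‖ ≤ √(B/η). -/

import Mathlib

open MeasureTheory ENNReal
open scoped NNReal

/-- Let `H` be a separable Hilbert space and `(X, μ)` a σ-finite positive
measure space such that `η = inf {μ E : E measurable, 0 < μ E < ∞} > 0`. Then every Bessel
mapping `F : X → H` with Bessel bound `B` is norm bounded: for μ-almost every `x ∈ X` one
has `‖F x‖ ≤ √(B / η)`. -/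
theorem stmt_0 {𝕜 X H : Type*} [RCLike 𝕜] [MeasurableSpace X]
    [NormedAddCommGroup H] [InnerProductSpace 𝕜 H] [CompleteSpace H]
    [TopologicalSpace.SeparableSpace H]
    (μ : Measure X) [SigmaFinite μ]
    (F : X → H) (B : ℝ) (hB : 0 < B)
    (hmeas : ∀ f : H, Measurable fun x => (inner 𝕜 f (F x) : 𝕜))
    (hBessel : ∀ f : H,
      ∫⁻ x, (‖(inner 𝕜 f (F x) : 𝕜)‖₊ : ℝ≥0∞) ^ 2 ∂μ ≤ ENNReal.ofReal (B * ‖f‖ ^ 2))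
    (η : ℝ≥0∞)
    (hη : η = sInf {m : ℝ≥0∞ | ∃ E : Set X, MeasurableSet E ∧ μ E = m ∧ 0 < m ∧ m < ⊤})
    (hηpos : 0 < η) :
    ∀ᵐ x ∂μ, ‖F x‖ ≤ Real.sqrt (B / η.toReal) := by
  set t : ℝ := B / η.toReal with ht
  have ht0 : 0 ≤ t := div_nonneg hB.le ENNReal.toReal_nonneg
  -- Key lemma: for every nonzero `f`, a.e. `|⟪f, F x⟫| ≤ √t * ‖f‖`.
  have key : ∀ f : H, f ≠ 0 → ∀ᵐ x ∂μ, ‖(inner 𝕜 f (F x) : 𝕜)‖ ≤ Real.sqrt t * ‖f‖ := by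
    intro f hf
    have hfpos : 0 < ‖f‖ := norm_pos_iff.mpr hf
    have hS : ∀ n : ℕ,
        μ {x | t * ‖f‖ ^ 2 + 1 / (n + 1) ≤ ‖(inner 𝕜 f (F x) : 𝕜)‖ ^ 2} = 0 := by
      intro n
      set c : ℝ := t * ‖f‖ ^ 2 + 1 / (n + 1) with hc
      have hcpos : 0 < c := by positivity
      set S : Set X := {x | c ≤ ‖(inner 𝕜 f (F x) : 𝕜)‖ ^ 2} with hSdef
      have hSmeas : MeasurableSet S :=
        measurableSet_le measurable_const (((hmeas f).norm).pow_const 2)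
      by_contra hne
      -- lower bound the lintegral
      have hsub : S = {x | ENNReal.ofReal c ≤ (‖(inner 𝕜 f (F x) : 𝕜)‖₊ : ℝ≥0∞) ^ 2} := by
        ext x
        simp only [hSdef, Set.mem_setOf_eq]
        rw [← ENNReal.ofReal_coe_nnreal, coe_nnnorm, ← ENNReal.ofReal_pow (norm_nonneg _),
          ENNReal.ofReal_le_ofReal_iff (by positivity)]
      have hmeasf : Measurable fun x => (‖(inner 𝕜 f (F x) : 𝕜)‖₊ : ℝ≥0∞) ^ 2 :=
        ((hmeas f).nnnorm.coe_nnreal_ennreal).pow_const 2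
      have hlow : ENNReal.ofReal c * μ S ≤ ENNReal.ofReal (B * ‖f‖ ^ 2) := by
        calc ENNReal.ofReal c * μ S
            = ENNReal.ofReal c *
              μ {x | ENNReal.ofReal c ≤ (‖(inner 𝕜 f (F x) : 𝕜)‖₊ : ℝ≥0∞) ^ 2} := by rw [hsub]
          _ ≤ ∫⁻ x, (‖(inner 𝕜 f (F x) : 𝕜)‖₊ : ℝ≥0∞) ^ 2 ∂μ :=
              mul_meas_ge_le_lintegral₀ hmeasf.aemeasurable _
          _ ≤ ENNReal.ofReal (B * ‖f‖ ^ 2) := hBessel f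
      have hcne : ENNReal.ofReal c ≠ 0 := (ENNReal.ofReal_pos.mpr hcpos).ne'
      rcases eq_or_ne (μ S) ⊤ with hStop | hSfin
      · rw [hStop, ENNReal.mul_top hcne] at hlow
        exact (ENNReal.ofReal_lt_top.not_ge hlow).elim
      · have hηle : η ≤ μ S := by
          rw [hη]
          exact sInf_le ⟨S, hSmeas, rfl, pos_iff_ne_zero.mpr hne, lt_top_iff_ne_top.mpr hSfin⟩
        have hηtop : η ≠ ⊤ := lt_top_iff_ne_top.mp (lt_of_le_of_lt hηle (lt_top_iff_ne_top.mpr hSfin))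
        have hηr : 0 < η.toReal := ENNReal.toReal_pos hηpos.ne' hηtop
        have h2 : ENNReal.ofReal c * η ≤ ENNReal.ofReal (B * ‖f‖ ^ 2) :=
          le_trans (mul_le_mul_right hηle _) hlow
        rw [← ENNReal.ofReal_toReal hηtop, ← ENNReal.ofReal_mul hcpos.le] at h2
        have h3 : c * η.toReal ≤ B * ‖f‖ ^ 2 := by
          have := (ENNReal.ofReal_le_ofReal_iff (by positivity)).mp h2
          linarith
        have hct : c * η.toReal = B * ‖f‖ ^ 2 + η.toReal / (n + 1) := by
          rw [hc, ht]
          field_simp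
        have : (0:ℝ) < η.toReal / (n + 1) := by positivity
        linarith [h3, hct ▸ h3]
    -- the bad set is contained in the union of the S_n
    rw [ae_iff]
    simp only [not_le]
    apply measure_mono_null _ (measure_iUnion_null hS)
    intro x hx
    simp only [Set.mem_setOf_eq] at hx
    have hsq : t * ‖f‖ ^ 2 < ‖(inner 𝕜 f (F x) : 𝕜)‖ ^ 2 := by
      have := pow_lt_pow_left₀ hx (by positivity : (0:ℝ) ≤ Real.sqrt t * ‖f‖) two_ne_zero
      calc t * ‖f‖ ^ 2 = (Real.sqrt t * ‖f‖) ^ 2 := by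
            rw [mul_pow, Real.sq_sqrt ht0]
        _ < _ := this
    obtain ⟨n, hn⟩ := exists_nat_one_div_lt (sub_pos.mpr hsq)
    exact Set.mem_iUnion.mpr ⟨n, by simp only [Set.mem_setOf_eq]; linarith⟩
  -- use a countable dense set
  obtain ⟨D, hDc, hDd⟩ := TopologicalSpace.exists_countable_dense H
  have hae : ∀ᵐ x ∂μ, ∀ d ∈ D, ‖(inner 𝕜 d (F x) : 𝕜)‖ ≤ Real.sqrt t * ‖d‖ := by
    rw [ae_ball_iff hDc]
    intro d hd
    by_cases hd0 : d = 0
    · filter_upwards with x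
      simp [hd0]
    · exact key d hd0
  filter_upwards [hae] with x hx
  have hall : ∀ g : H, ‖(inner 𝕜 g (F x) : 𝕜)‖ ≤ Real.sqrt t * ‖g‖ := by
    have hclosed : IsClosed {g : H | ‖(inner 𝕜 g (F x) : 𝕜)‖ ≤ Real.sqrt t * ‖g‖} :=
      isClosed_le ((continuous_id.inner continuous_const).norm)
        (continuous_const.mul continuous_norm)
    intro g
    have huniv : (Set.univ : Set H) ⊆ {g : H | ‖(inner 𝕜 g (F x) : 𝕜)‖ ≤ Real.sqrt t * ‖g‖} := by
      rw [← hDd.closure_eq]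
      exact hclosed.closure_subset_iff.mpr hx
    exact huniv (Set.mem_univ g)
  have hFx := hall (F x)
  rw [inner_self_eq_norm_sq_to_K (𝕜 := 𝕜)] at hFx
  have hnorm : ‖((‖F x‖ : 𝕜)) ^ 2‖ = ‖F x‖ ^ 2 := by
    rw [norm_pow, RCLike.norm_ofReal, abs_norm]
  rw [hnorm] at hFx
  rcases eq_or_lt_of_le (norm_nonneg (F x)) with h0 | h0
  · rw [← h0]; exact Real.sqrt_nonneg t
  · nlinarith [hFx, h0]
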